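/- For B, h, N0, ζ, pc > 0, the offloading efficiency p ↦ B * Real.log (1 + p*h/N0) / (ζ*p + pc) on (0, ∞) has a unique stationary point p* characterized by h/(N0 + p*h) * (ζ*p + pc) = ζ * Real.log (1 + p*h/N0), and the function is strictly quasiconcave (increasing before p*, decreasing after). -/

import Mathlib

open Real Set

private lemma dg_aux (h N0 ζ pc : ℝ) (hh : 0 < h) (hN : 0 < N0) {p : ℝ} (hp : 0 ≤ p) :
    HasDerivAt (fun x : ℝ => h / (N0 + x * h) * (ζ * x + pc) - ζ * Real.log (1 + x * h / N0))
      (-(h ^ 2 * (ζ * p + pc)) / (N0 + p * h) ^ 2) p := by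
  have hd1 : 0 < N0 + p * h := by positivity
  have ha : 0 < 1 + p * h / N0 := by positivity
  have H1 : HasDerivAt (fun x : ℝ => N0 + x * h) h p := by
    simpa using (hasDerivAt_mul_const h).const_add N0
  have H2 : HasDerivAt (fun x : ℝ => h / (N0 + x * h))
      ((0 * (N0 + p * h) - h * h) / (N0 + p * h) ^ 2) p :=
    (hasDerivAt_const p h).div H1 hd1.ne'
  have H3 : HasDerivAt (fun x : ℝ => ζ * x + pc) (ζ * 1) p :=
    ((hasDerivAt_id p).const_mul ζ).add_const pc
  have e : (fun x : ℝ => 1 + x * h / N0) = fun x : ℝ => 1 + x * (h / N0) := by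
    funext x; ring
  have Hu : HasDerivAt (fun x : ℝ => 1 + x * h / N0) (h / N0) p := by
    rw [e]; simpa using (hasDerivAt_mul_const (h / N0)).const_add 1
  have Hlog : HasDerivAt (fun x : ℝ => Real.log (1 + x * h / N0))
      ((1 + p * h / N0)⁻¹ * (h / N0)) p :=
    by have := (Real.hasDerivAt_log ha.ne').comp p Hu; exact this
  have := (H2.mul H3).sub (Hlog.const_mul ζ)
  refine this.congr_deriv ?_
  field_simp
  ring

private lemma df_aux (B h N0 ζ pc : ℝ) (hh : 0 < h) (hN : 0 < N0) (hζ : 0 < ζ) (hpc : 0 < pc)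
    {p : ℝ} (hp : 0 ≤ p) :
    HasDerivAt (fun x : ℝ => B * Real.log (1 + x * h / N0) / (ζ * x + pc))
      (B * (h / (N0 + p * h) * (ζ * p + pc) - ζ * Real.log (1 + p * h / N0)) / (ζ * p + pc) ^ 2)
      p := by
  have hd1 : 0 < N0 + p * h := by positivity
  have hd2 : 0 < ζ * p + pc := by positivity
  have ha : 0 < 1 + p * h / N0 := by positivity
  have H3 : HasDerivAt (fun x : ℝ => ζ * x + pc) (ζ * 1) p :=
    ((hasDerivAt_id p).const_mul ζ).add_const pc
  have e : (fun x : ℝ => 1 + x * h / N0) = fun x : ℝ => 1 + x * (h / N0) := by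
    funext x; ring
  have Hu : HasDerivAt (fun x : ℝ => 1 + x * h / N0) (h / N0) p := by
    rw [e]; simpa using (hasDerivAt_mul_const (h / N0)).const_add 1
  have Hlog : HasDerivAt (fun x : ℝ => Real.log (1 + x * h / N0))
      ((1 + p * h / N0)⁻¹ * (h / N0)) p :=
    by have := (Real.hasDerivAt_log ha.ne').comp p Hu; exact this
  have := (Hlog.const_mul B).div H3 hd2.ne'
  refine this.congr_deriv ?_
  field_simp

theorem stmt_15 (B h N0 ζ pc : ℝ) (hB : 0 < B) (hh : 0 < h) (hN : 0 < N0)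
    (hζ : 0 < ζ) (hpc : 0 < pc) :
    ∃ p : ℝ, 0 < p ∧
      h / (N0 + p * h) * (ζ * p + pc) = ζ * Real.log (1 + p * h / N0) ∧
      (∀ q : ℝ, 0 < q →
        h / (N0 + q * h) * (ζ * q + pc) = ζ * Real.log (1 + q * h / N0) → q = p) ∧
      StrictMonoOn (fun p : ℝ => B * Real.log (1 + p * h / N0) / (ζ * p + pc))
        (Set.Ioc 0 p) ∧
      StrictAntiOn (fun p : ℝ => B * Real.log (1 + p * h / N0) / (ζ * p + pc))
        (Set.Ici p) := by
  set g : ℝ → ℝ := fun x => h / (N0 + x * h) * (ζ * x + pc) - ζ * Real.log (1 + x * h / N0)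
    with hg_def
  -- g is strictly decreasing on [0, ∞)
  have hanti : StrictAntiOn g (Ici 0) := by
    apply strictAntiOn_of_deriv_neg (convex_Ici 0)
    · intro x hx
      exact (dg_aux h N0 ζ pc hh hN hx).continuousAt.continuousWithinAt
    · intro x hx
      rw [interior_Ici] at hx
      rw [(dg_aux h N0 ζ pc hh hN hx.le).deriv]
      have hx' : (0 : ℝ) < x := hx
      have h1 : 0 < h ^ 2 * (ζ * x + pc) :=
        mul_pos (pow_pos hh 2) (add_pos (mul_pos hζ hx') hpc)
      have hdx : 0 < N0 + x * h := by nlinarith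
      exact div_neg_of_neg_of_pos (neg_lt_zero.mpr h1) (pow_pos hdx 2)
  -- g 0 > 0
  have hg0 : 0 < g 0 := by
    show 0 < h / (N0 + 0 * h) * (ζ * 0 + pc) - ζ * Real.log (1 + 0 * h / N0)
    simp only [zero_mul, add_zero, mul_zero, zero_add, zero_div, Real.log_one, sub_zero]
    positivity
  -- find p₁ with g p₁ < 0
  set c : ℝ := (ζ + pc) / ζ with hc_def
  set p₁ : ℝ := max 1 ((Real.exp c - 1) * N0 / h + 1) with hp₁_def
  have hp₁1 : (1 : ℝ) ≤ p₁ := le_max_left _ _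
  have hp₁0 : (0 : ℝ) ≤ p₁ := by linarith
  have hd1 : 0 < N0 + p₁ * h := by nlinarith [mul_nonneg hp₁0 hh.le]
  have hgp₁ : g p₁ < 0 := by
    have hA : (Real.exp c - 1) * N0 / h + 1 ≤ p₁ := le_max_right _ _
    have hAh : ((Real.exp c - 1) * N0 / h + 1) * h = (Real.exp c - 1) * N0 + h := by
      field_simp
    have hx1 : (0 : ℝ) < 1 + p₁ * h / N0 := by
      have := div_nonneg (mul_nonneg hp₁0 hh.le) hN.le
      linarith
    have hlog : c < Real.log (1 + p₁ * h / N0) := by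
      rw [Real.lt_log_iff_exp_lt hx1]
      have h1 : ((Real.exp c - 1) * N0 / h + 1) * h ≤ p₁ * h :=
        mul_le_mul_of_nonneg_right hA hh.le
      rw [hAh] at h1
      rw [show (1 : ℝ) + p₁ * h / N0 = (N0 + p₁ * h) / N0 by field_simp,
        lt_div_iff₀ hN]
      nlinarith
    have t1 : h / (N0 + p₁ * h) * (ζ * p₁ + pc) ≤ ζ + pc := by
      rw [div_mul_eq_mul_div, div_le_iff₀ hd1]
      nlinarith [mul_nonneg (mul_nonneg hpc.le hh.le) (by linarith : (0:ℝ) ≤ p₁ - 1),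
        mul_pos hζ hN, mul_pos hpc hN]
    have hzc : ζ * c = ζ + pc := by rw [hc_def]; field_simp
    have t2 : ζ * c < ζ * Real.log (1 + p₁ * h / N0) :=
      mul_lt_mul_of_pos_left hlog hζ
    show h / (N0 + p₁ * h) * (ζ * p₁ + pc) - ζ * Real.log (1 + p₁ * h / N0) < 0
    linarith
  -- IVT gives a root
  have hcont : ContinuousOn g (Icc 0 p₁) := fun x hx =>
    (dg_aux h N0 ζ pc hh hN hx.1).continuousAt.continuousWithinAt
  obtain ⟨p, hpI, hgp⟩ := intermediate_value_Icc' hp₁0 hcont ⟨hgp₁.le, hg0.le⟩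
  have hp_pos : 0 < p := by
    rcases eq_or_lt_of_le hpI.1 with h0 | h0
    · exfalso; rw [← h0] at hgp; linarith
    · exact h0
  refine ⟨p, hp_pos, sub_eq_zero.mp hgp, ?_, ?_, ?_⟩
  · -- uniqueness
    intro q hq heq
    have hgq : g q = 0 := sub_eq_zero.mpr heq
    exact hanti.injOn hq.le hp_pos.le (by rw [hgq, hgp])
  · -- strictly increasing on (0, p]
    apply strictMonoOn_of_deriv_pos (convex_Ioc 0 p)
    · intro x hx
      exact ((df_aux B h N0 ζ pc hh hN hζ hpc hx.1.le).continuousAt).continuousWithinAt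
    · intro x hx
      rw [interior_Ioc] at hx
      rw [(df_aux B h N0 ζ pc hh hN hζ hpc hx.1.le).deriv]
      have hgx : 0 < g x := by
        have := hanti (le_of_lt hx.1 : x ∈ Ici 0) hp_pos.le hx.2
        rw [hgp] at this; exact this
      have hgx' : 0 < h / (N0 + x * h) * (ζ * x + pc) - ζ * Real.log (1 + x * h / N0) := hgx
      have hd2 : 0 < ζ * x + pc := add_pos (mul_pos hζ hx.1) hpc
      exact div_pos (mul_pos hB hgx') (pow_pos hd2 2)
  · -- strictly decreasing on [p, ∞)
    apply strictAntiOn_of_deriv_neg (convex_Ici p)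
    · intro x hx
      have hx0 : 0 ≤ x := le_trans hp_pos.le hx
      exact ((df_aux B h N0 ζ pc hh hN hζ hpc hx0).continuousAt).continuousWithinAt
    · intro x hx
      rw [interior_Ici] at hx
      have hx0 : 0 < x := lt_trans hp_pos hx
      rw [(df_aux B h N0 ζ pc hh hN hζ hpc hx0.le).deriv]
      have hgx : g x < 0 := by
        have := hanti hp_pos.le hx0.le hx
        rw [hgp] at this; exact this
      have hgx' : h / (N0 + x * h) * (ζ * x + pc) - ζ * Real.log (1 + x * h / N0) < 0 := hgx
      have hd2 : 0 < ζ * x + pc := add_pos (mul_pos hζ hx0) hpc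
      exact div_neg_of_neg_of_pos (mul_neg_of_pos_of_neg hB hgx') (pow_pos hd2 2)
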